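/- Let G be a finite group and ω a normalized 3-cocycle on G with values in ℂˣ. Then for all g, x, y, z ∈ G one has θ_g(x,y)·θ_g(x*y,z) = θ_{g^x}(y,z)·θ_g(x,y*z). -/

import Mathlib

/-- Conjugation: `g^x = x⁻¹ * g * x`. -/
def cjg {G : Type*} [Group G] (g x : G) : G := x⁻¹ * g * x

/-- A normalized 3-cocycle on `G` with values in `ℂˣ`. -/
def IsNormalized3Cocycle {G : Type*} [Group G] (ω : G → G → G → ℂˣ) : Prop :=
  (∀ x y z w, ω y z w * ω x (y * z) w * ω x y z = ω (x * y) z w * ω x y (z * w)) ∧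
  (∀ x y z, (x = 1 ∨ y = 1 ∨ z = 1) → ω x y z = 1)

/-- `θ_g(x,y) = ω(g,x,y)·ω(x,y,g^{xy}) / ω(x,g^x,y)`. -/
def theta {G : Type*} [Group G] (ω : G → G → G → ℂˣ) (g x y : G) : ℂˣ :=
  ω g x y * ω x y (cjg g (x * y)) / ω x (cjg g x) y

/-- `γ_g(x,y) = ω(x,y,g)·ω(g,x^g,y^g) / ω(x,g,y^g)`. -/
def gam {G : Type*} [Group G] (ω : G → G → G → ℂˣ) (g x y : G) : ℂˣ :=
  ω x y g * ω g (cjg x g) (cjg y g) / ω x g (cjg y g)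

/-- A 2-coboundary of `G` with values in `ℂˣ`. -/
def Is2Coboundary {G : Type*} [Group G] (β : G → G → ℂˣ) : Prop :=
  ∃ f : G → ℂˣ, f 1 = 1 ∧ ∀ x y, β x y = f x * f y / f (x * y)

/-- A (normalized) 2-cocycle of `G` with values in `ℂˣ`. -/
def Is2Cocycle {G : Type*} [Group G] (β : G → G → ℂˣ) : Prop :=
  (∀ x, β x 1 = 1 ∧ β 1 x = 1) ∧
  (∀ x y z, β x y * β (x * y) z = β y z * β x (y * z))

/-- An ω-admissible pair `(τ, ν)` for a subgroup `A`. -/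
def IsAdmissiblePair {G : Type*} [Group G] (ω : G → G → G → ℂˣ) (A : Subgroup G)
    (τ : A → G → ℂˣ) (ν : A → (G →* ℂˣ)) : Prop :=
  (∀ x, τ 1 x = 1) ∧ (∀ a, τ a 1 = 1) ∧
  (∀ (a : A) (x y : G), theta ω (a : G) x y = τ a x * τ a y / τ a (x * y)) ∧
  (ν 1 = 1) ∧
  (∀ (a b : A) (g : G),
    theta ω g (a : G) (b : G) * (τ a g * τ b g / τ (a * b) g)
      = ν a g * ν b g / ν (a * b) g)

theorem theta_two_cocycle_identity {G : Type*} [Group G] [Finite G]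
    (ω : G → G → G → ℂˣ) (hω : IsNormalized3Cocycle ω) (g x y z : G) :
    theta ω g x y * theta ω g (x * y) z
      = theta ω (cjg g x) y z * theta ω g x (y * z) := by
  
  obtain ⟨h, -⟩ := hω
  have hA := h g x y z
  have hB := h x (cjg g x) y z
  have hC := h x y (cjg g (x*y)) z
  have hD := h x y z (cjg g (x*(y*z)))
  simp only [theta, cjg, mul_assoc, mul_inv_rev, inv_mul_cancel_left, mul_inv_cancel_left]
    at hA hB hC hD ⊢
  rw [Units.ext_iff] at hA hB hC hD ⊢
  push_cast at hA hB hC hD ⊢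
  field_simp at hA hB hC hD ⊢
  set A1 := ((ω x y z : ℂˣ) : ℂ)
  set A2 := ((ω g (x * y) z : ℂˣ) : ℂ)
  set A3 := ((ω g x y : ℂˣ) : ℂ)
  set A4 := ((ω (g * x) y z : ℂˣ) : ℂ)
  set A5 := ((ω g x (y * z) : ℂˣ) : ℂ)
  set B1 := ((ω (x⁻¹ * (g * x)) y z : ℂˣ) : ℂ)
  set B2 := ((ω x (x⁻¹ * (g * (x * y))) z : ℂˣ) : ℂ)
  set B3 := ((ω x (x⁻¹ * (g * x)) y : ℂˣ) : ℂ)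
  set B6 := ((ω x (x⁻¹ * (g * x)) (y * z) : ℂˣ) : ℂ)
  set C1 := ((ω y (y⁻¹ * (x⁻¹ * (g * (x * y)))) z : ℂˣ) : ℂ)
  set C3 := ((ω x y (y⁻¹ * (x⁻¹ * (g * (x * y)))) : ℂˣ) : ℂ)
  set C4 := ((ω (x * y) (y⁻¹ * (x⁻¹ * (g * (x * y)))) z : ℂˣ) : ℂ)
  set C5 := ((ω x y (y⁻¹ * (x⁻¹ * (g * (x * (y * z))))) : ℂˣ) : ℂ)
  set D1 := ((ω y z (z⁻¹ * (y⁻¹ * (x⁻¹ * (g * (x * (y * z)))))) : ℂˣ) : ℂ)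
  set D2 := ((ω x (y * z) (z⁻¹ * (y⁻¹ * (x⁻¹ * (g * (x * (y * z)))))) : ℂˣ) : ℂ)
  set D4 := ((ω (x * y) z (z⁻¹ * (y⁻¹ * (x⁻¹ * (g * (x * (y * z)))))) : ℂˣ) : ℂ)
  have hS : A1 * A4 * B2 * C5 ≠ 0 := by
    simp [A1, A4, B2, C5]
  apply mul_right_cancel₀ hS
  have hAC : (A1 * (A2 * A3)) * (C1 * (B2 * C3)) = (A4 * A5) * (C4 * C5) := by
    linear_combination (B2 * C1 * C3) * hA + (A4 * A5) * hC
  have hBD : (B1 * (B2 * B3)) * (D1 * (D2 * A1)) = (A4 * B6) * (D4 * C5) := by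
    linear_combination (A1 * D1 * D2) * hB + (A4 * B6) * hD
  linear_combination (A4 * B6 * (D4 * C5)) * hAC - (A4 * A5 * (C4 * C5)) * hBD
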